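/- For all n ≥ 1, the number of increasing ordered trees with n edges (with vertices labeled 0,1,...,n, each child exceeding its parent) equals the odd double factorial (2n-1)!! = 1·3·5···(2n-1). -/

import Mathlib

inductive OTree : Type where
  | node : ℕ → List OTree → OTree

/-- The label of the root of the tree. -/
def OTree.label : OTree → ℕ
  | .node l _ => l

/-- The (ordered) list of subtrees at the root. -/
def OTree.children : OTree → List OTree
  | .node _ ts => ts

/-- Labels of all vertices in preorder. -/
def OTree.preorder : OTree → List ℕ
  | .node l ts => l :: (ts.attach.map (fun t => OTree.preorder t.1)).flatten
decreasing_by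
  have := List.sizeOf_lt_of_mem t.2
  simp only [OTree.node.sizeOf_spec]
  omega

/-- Labels of the leaves, in preorder (walkaround) order. -/
def OTree.leaves : OTree → List ℕ
  | .node l ts =>
      if ts.isEmpty then [l] else (ts.attach.map (fun t => OTree.leaves t.1)).flatten
decreasing_by
  have := List.sizeOf_lt_of_mem t.2
  simp only [OTree.node.sizeOf_spec]
  omega

/-- Each child's label exceeds its parent's label. -/
inductive OTree.Increasing : OTree → Prop where
  | node : ∀ (l : ℕ) (ts : List OTree),
      (∀ t ∈ ts, l < t.label) → (∀ t ∈ ts, t.Increasing) →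
      OTree.Increasing (.node l ts)

/-- An increasing ordered tree of size `n` (i.e. with `n` edges): an ordered
tree with `n+1` vertices labeled `0,1,...,n` (each label used exactly once, as
recorded by the preorder list of labels), rooted at the vertex labeled `0`,
such that each child's label exceeds its parent's label. -/
def IsIncOrdTree (n : ℕ) (t : OTree) : Prop :=
  t.label = 0 ∧ t.preorder.Perm (List.range (n + 1)) ∧ t.Increasing

/-- The labels of the leaves, taken in preorder, are increasing. -/
def HasIncLeaves (t : OTree) : Prop :=
  t.leaves.Pairwise (· < ·)

/-! ### Auxiliary definitions -/

mutual
def numSlots : OTree → ℕ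
  | .node _ ts => 1 + numSlotsL ts
def numSlotsL : List OTree → ℕ
  | [] => 0
  | t :: ts => numSlots t + 1 + numSlotsL ts
end

mutual
def ins (m : ℕ) : OTree → ℕ → OTree
  | .node l ts, j => if j = 0 then .node l (.node m [] :: ts) else .node l (insL m ts (j - 1))
def insL (m : ℕ) : List OTree → ℕ → List OTree
  | [], _ => []
  | t :: ts, j =>
      if j < numSlots t then ins m t j :: ts
      else if j = numSlots t then t :: .node m [] :: ts
      else t :: insL m ts (j - numSlots t - 1)
end

def insAt (m : ℕ) (ts : List OTree) (j : ℕ) : List OTree :=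
  if j = 0 then .node m [] :: ts else insL m ts (j - 1)

mutual
def del (m : ℕ) : OTree → OTree × ℕ
  | .node l ts => (.node l (delL m ts).1, (delL m ts).2)
def delL (m : ℕ) : List OTree → List OTree × ℕ
  | [] => ([], 0)
  | t :: ts =>
      if t.label = m then (ts, 0)
      else if m ∈ t.preorder then ((del m t).1 :: ts, 1 + (del m t).2)
      else (t :: (delL m ts).1, 1 + numSlots t + (delL m ts).2)
end

def preL (ts : List OTree) : List ℕ := (ts.map OTree.preorder).flatten

/-! ### Basic lemmas -/

theorem preorder_node (l : ℕ) (ts : List OTree) :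
    (OTree.node l ts).preorder = l :: preL ts := by
  rw [OTree.preorder, preL]
  congr 1
  simp

theorem preL_nil : preL [] = [] := rfl

theorem preL_cons (t : OTree) (ts : List OTree) :
    preL (t :: ts) = t.preorder ++ preL ts := by
  simp [preL]

theorem ins_node (m l : ℕ) (ts : List OTree) (j : ℕ) :
    ins m (.node l ts) j = .node l (insAt m ts j) := by
  rw [ins, insAt]; split <;> rfl

theorem otree_ind {Pt : OTree → Prop}
    (h : ∀ l ts, (∀ t ∈ ts, Pt t) → Pt (.node l ts)) : ∀ t, Pt t := by
  intro t
  refine OTree.rec (motive_1 := Pt) (motive_2 := fun ts => ∀ t ∈ ts, Pt t) h ?_ ?_ t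
  · simp
  · intro t ts ht hts u hu
    rcases List.mem_cons.1 hu with h1 | h1
    · exact h1 ▸ ht
    · exact hts u h1

theorem label_mem_preorder (t : OTree) : t.label ∈ t.preorder := by
  cases t with
  | node l ts => rw [preorder_node]; exact List.mem_cons_self

theorem mem_preL_of_mem {ts : List OTree} {u : OTree} (hu : u ∈ ts) {x : ℕ}
    (hx : x ∈ u.preorder) : x ∈ preL ts := by
  rw [preL, List.mem_flatten]
  exact ⟨u.preorder, List.mem_map_of_mem hu, hx⟩

theorem label_ins (m : ℕ) (t : OTree) (j : ℕ) : (ins m t j).label = t.label := by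
  cases t with
  | node l ts => rw [ins_node]; rfl

theorem numSlots_node (l : ℕ) (ts : List OTree) :
    numSlots (.node l ts) = 1 + numSlotsL ts := by rw [numSlots]

theorem numSlots_pos (t : OTree) : 1 ≤ numSlots t := by
  cases t with
  | node l ts => rw [numSlots_node]; omega

/-- numSlots in terms of the number of vertices -/
theorem numSlots_eq : ∀ t : OTree, numSlots t + 1 = 2 * t.preorder.length := by
  refine otree_ind ?_
  intro l ts ih
  have hL : numSlotsL ts = 2 * (preL ts).length := by
    induction ts with
    | nil => rfl
    | cons t ts ihl =>
      rw [numSlotsL, preL_cons]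
      have h1 := ih t (List.mem_cons_self)
      have h2 := ihl (fun u hu => ih u (List.mem_cons_of_mem _ hu))
      simp only [List.length_append]
      omega
  rw [numSlots_node, preorder_node]
  simp only [List.length_cons]
  omega

/-! ### preorder of an insertion -/

theorem preorder_ins (m : ℕ) :
    ∀ t : OTree, ∀ j < numSlots t, (ins m t j).preorder.Perm (m :: t.preorder) := by
  refine otree_ind ?_
  intro l ts ih j hj
  have hlist : ∀ ts' : List OTree, (∀ u ∈ ts', u ∈ ts) → ∀ j < numSlotsL ts',
      (preL (insL m ts' j)).Perm (m :: preL ts') := by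
    intro ts'
    induction ts' with
    | nil => intro _ j hj; rw [numSlotsL] at hj; omega
    | cons t ts' ihl =>
      intro hsub j hj
      rw [insL]
      rcases lt_trichotomy j (numSlots t) with h | h | h
      · rw [if_pos h, preL_cons, preL_cons]
        exact (ih t (hsub t (List.mem_cons_self)) j h).append_right _
      · rw [if_neg (by omega : ¬ j < numSlots t), if_pos h, preL_cons, preL_cons,
          preL_cons, preorder_node, preL_nil]
        exact List.perm_middle
      · rw [if_neg (by omega : ¬ j < numSlots t), if_neg (by omega : ¬ j = numSlots t),
          preL_cons, preL_cons]
        have hlt : j - numSlots t - 1 < numSlotsL ts' := by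
          rw [numSlotsL] at hj; omega
        have p := ihl (fun u hu => hsub u (List.mem_cons_of_mem _ hu)) _ hlt
        exact (p.append_left t.preorder).trans List.perm_middle
  rw [ins_node, insAt]
  by_cases h0 : j = 0
  · rw [if_pos h0, preorder_node, preorder_node, preL_cons, preorder_node, preL_nil]
    exact List.Perm.swap _ _ _
  · rw [if_neg h0, preorder_node, preorder_node]
    have hlt : j - 1 < numSlotsL ts := by rw [numSlots_node] at hj; omega
    exact ((hlist ts (fun u hu => hu) _ hlt).cons l).trans (List.Perm.swap _ _ _)

theorem label_insL (m : ℕ) : ∀ ts : List OTree, ∀ j, ∀ u ∈ insL m ts j,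
    u.label = m ∨ ∃ v ∈ ts, u.label = v.label := by
  intro ts
  induction ts with
  | nil => intro j u hu; rw [insL] at hu; simp at hu
  | cons t ts ihl =>
    intro j u hu
    rw [insL] at hu
    split_ifs at hu with h1 h2
    · rcases List.mem_cons.1 hu with h | h
      · exact Or.inr ⟨t, List.mem_cons_self, h ▸ label_ins m t j⟩
      · exact Or.inr ⟨u, List.mem_cons_of_mem _ h, rfl⟩
    · rcases List.mem_cons.1 hu with h | h
      · exact Or.inr ⟨u, h ▸ List.mem_cons_self, rfl⟩
      · rcases List.mem_cons.1 h with h' | h'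
        · exact Or.inl (by rw [h']; rfl)
        · exact Or.inr ⟨u, List.mem_cons_of_mem _ h', rfl⟩
    · rcases List.mem_cons.1 hu with h | h
      · exact Or.inr ⟨u, h ▸ List.mem_cons_self, rfl⟩
      · rcases ihl _ u h with h' | ⟨v, hv, hv'⟩
        · exact Or.inl h'
        · exact Or.inr ⟨v, List.mem_cons_of_mem _ hv, hv'⟩

theorem increasing_ins (m : ℕ) : ∀ t : OTree, t.Increasing →
    (∀ x ∈ t.preorder, x < m) → ∀ j, (ins m t j).Increasing := by
  refine otree_ind ?_
  intro l ts ih hinc hlab j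
  cases hinc with
  | node _ _ hlt hincs =>
  rw [preorder_node] at hlab
  have hlm : l < m := hlab l (List.mem_cons_self)
  have hlabL : ∀ x ∈ preL ts, x < m := fun x hx => hlab x (List.mem_cons_of_mem _ hx)
  have hleaf : OTree.Increasing (.node m []) := .node m [] (by simp) (by simp)
  have hlist : ∀ ts' : List OTree, (∀ u ∈ ts', u ∈ ts) → ∀ j,
      ∀ u ∈ insL m ts' j, u.Increasing := by
    intro ts'
    induction ts' with
    | nil => intro _ j u hu; rw [insL] at hu; simp at hu
    | cons t ts' ihl =>
      intro hsub j u hu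
      have htmem := hsub t (List.mem_cons_self)
      rw [insL] at hu
      split_ifs at hu with h1 h2
      · rcases List.mem_cons.1 hu with h | h
        · exact h ▸ ih t htmem (hincs t htmem)
            (fun x hx => hlabL x (mem_preL_of_mem htmem hx)) j
        · exact hincs u (hsub u (List.mem_cons_of_mem _ h))
      · rcases List.mem_cons.1 hu with h | h
        · exact hincs u (h ▸ htmem)
        · rcases List.mem_cons.1 h with h' | h'
          · exact h' ▸ hleaf
          · exact hincs u (hsub u (List.mem_cons_of_mem _ h'))
      · rcases List.mem_cons.1 hu with h | h
        · exact hincs u (h ▸ htmem)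
        · exact ihl (fun v hv => hsub v (List.mem_cons_of_mem _ hv)) _ u h
  rw [ins_node, insAt]
  split_ifs with h0
  · refine .node l _ ?_ ?_
    · intro u hu
      rcases List.mem_cons.1 hu with h | h
      · rw [h]; exact hlm
      · exact hlt u h
    · intro u hu
      rcases List.mem_cons.1 hu with h | h
      · exact h ▸ hleaf
      · exact hincs u h
  · refine .node l _ ?_ ?_
    · intro u hu
      rcases label_insL m ts _ u hu with h | ⟨v, hv, hv'⟩
      · rw [h]; exact hlm
      · rw [hv']; exact hlt v hv
    · exact hlist ts (fun u hu => hu) _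

theorem del_ins (m : ℕ) : ∀ t : OTree, m ∉ t.preorder → ∀ j < numSlots t,
    del m (ins m t j) = (t, j) := by
  refine otree_ind ?_
  intro l ts ih hm j hj
  rw [preorder_node] at hm
  have hlm : l ≠ m := fun h => hm (h ▸ List.mem_cons_self)
  have hmL : m ∉ preL ts := fun h => hm (List.mem_cons_of_mem _ h)
  have hlist : ∀ ts' : List OTree, (∀ u ∈ ts', u ∈ ts) → m ∉ preL ts' →
      ∀ j < 1 + numSlotsL ts', delL m (insAt m ts' j) = (ts', j) := by
    intro ts'
    induction ts' with
    | nil =>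
      intro _ hm' j hj'
      rw [numSlotsL] at hj'
      interval_cases j
      rw [insAt, if_pos rfl, delL]
      simp [OTree.label]
    | cons t ts' ihl =>
      intro hsub hm' j hj'
      have htmem := hsub t (List.mem_cons_self)
      rw [preL_cons] at hm'
      have hmt : m ∉ t.preorder := fun h => hm' (List.mem_append_left _ h)
      have hmts' : m ∉ preL ts' := fun h => hm' (List.mem_append_right _ h)
      have htlab : t.label ≠ m := fun h => hmt (h ▸ label_mem_preorder t)
      rw [insAt]
      by_cases h0 : j = 0
      · rw [if_pos h0, delL]
        simp only [OTree.label, if_true]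
        rw [h0]
      · rw [if_neg h0, insL]
        rcases lt_trichotomy (j - 1) (numSlots t) with h | h | h
        · rw [if_pos h, delL,
            if_neg (by rw [label_ins]; exact htlab),
            if_pos (((preorder_ins m t (j-1) h).mem_iff).2 (List.mem_cons_self)),
            ih t htmem hmt (j-1) h]
          simp only
          congr 1
          omega
        · rw [if_neg (by omega : ¬ j - 1 < numSlots t), if_pos h, delL, if_neg htlab,
            if_neg hmt, delL]
          simp only [OTree.label, if_true]
          congr 1
          omega
        · rw [if_neg (by omega : ¬ j - 1 < numSlots t),
            if_neg (by omega : ¬ j - 1 = numSlots t)]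
          have hins : insL m ts' (j - 1 - numSlots t - 1) = insAt m ts' (j - 1 - numSlots t) := by
            rw [insAt, if_neg (by omega : ¬ j - 1 - numSlots t = 0)]
          have hlt : j - 1 - numSlots t < 1 + numSlotsL ts' := by
            rw [numSlotsL] at hj'; omega
          rw [hins, delL, if_neg htlab, if_neg hmt,
            ihl (fun v hv => hsub v (List.mem_cons_of_mem _ hv)) hmts' _ hlt]
          simp only
          congr 1
          omega
  rw [ins_node, del, hlist ts (fun u hu => hu) hmL j (by rw [numSlots_node] at hj; exact hj)]

theorem ins_del (m : ℕ) : ∀ t : OTree, t.Increasing → t.preorder.Nodup →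
    (∀ x ∈ t.preorder, x ≤ m) → m ∈ t.preorder → t.label ≠ m →
    ins m (del m t).1 (del m t).2 = t ∧ (del m t).2 < numSlots (del m t).1 ∧
      (del m t).1.Increasing ∧ (del m t).1.label = t.label := by
  refine otree_ind ?_
  intro l ts ih hinc hnd hle hmem hne
  cases hinc with
  | node _ _ hlt hincs =>
  rw [preorder_node] at hnd hle hmem
  have hl : l ≠ m := hne
  have hmem' : m ∈ preL ts := by
    rcases List.mem_cons.1 hmem with h | h
    · exact absurd h.symm hl
    · exact h
  have hleM : ∀ x ∈ preL ts, x ≤ m := fun x hx => hle x (List.mem_cons_of_mem _ hx)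
  have hndL : (preL ts).Nodup := (List.nodup_cons.1 hnd).2
  have hlist : ∀ ts' : List OTree, (∀ u ∈ ts', u ∈ ts) → (preL ts').Nodup →
      m ∈ preL ts' →
      insAt m (delL m ts').1 (delL m ts').2 = ts' ∧
      (delL m ts').2 ≤ numSlotsL (delL m ts').1 ∧
      (∀ u ∈ (delL m ts').1, u.Increasing) ∧
      (∀ u ∈ (delL m ts').1, ∃ v ∈ ts', u.label = v.label) := by
    intro ts'
    induction ts' with
    | nil => intro _ _ h; simp [preL_nil] at h
    | cons t ts' ihl =>
      intro hsub hnd' hmem''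
      have htmem := hsub t (List.mem_cons_self)
      rw [preL_cons] at hnd' hmem''
      have hndt : t.preorder.Nodup := (List.nodup_append.1 hnd').1
      have hndts' : (preL ts').Nodup := (List.nodup_append.1 hnd').2.1
      rw [delL]
      split_ifs with h1 h2
      · -- t is the leaf labeled m
        have ht : t = .node m [] := by
          cases t with
          | node lb cs =>
            have hlb : lb = m := h1
            cases cs with
            | nil => rw [hlb]
            | cons c cs' =>
              exfalso
              cases hincs _ htmem with
              | node _ _ h3 _ =>
                have hc : m < c.label := hlb ▸ h3 c (List.mem_cons_self)
                have hcmem : c.label ∈ (OTree.node lb (c :: cs')).preorder := by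
                  rw [preorder_node]
                  exact List.mem_cons_of_mem _
                    (mem_preL_of_mem (List.mem_cons_self) (label_mem_preorder c))
                have := hleM c.label (mem_preL_of_mem htmem hcmem)
                omega
        refine ⟨?_, by omega, fun u hu => hincs u (hsub u (List.mem_cons_of_mem _ hu)),
          fun u hu => ⟨u, List.mem_cons_of_mem _ hu, rfl⟩⟩
        rw [insAt, if_pos rfl, ht]
      · -- m is inside t
        obtain ⟨he, hb, hi, hlab⟩ := ih t htmem (hincs t htmem) hndt
          (fun x hx => hleM x (mem_preL_of_mem htmem hx)) h2 h1
        refine ⟨?_, ?_, ?_, ?_⟩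
        · rw [insAt, if_neg (by omega : ¬ 1 + (del m t).2 = 0)]
          have : 1 + (del m t).2 - 1 = (del m t).2 := by omega
          rw [this, insL, if_pos hb, he]
        · simp only [numSlotsL]
          omega
        · intro u hu
          rcases List.mem_cons.1 hu with h | h
          · exact h ▸ hi
          · exact hincs u (hsub u (List.mem_cons_of_mem _ h))
        · intro u hu
          rcases List.mem_cons.1 hu with h | h
          · exact ⟨t, List.mem_cons_self, h ▸ hlab⟩
          · exact ⟨u, List.mem_cons_of_mem _ h, rfl⟩
      · -- m is in the tail
        have hmts' : m ∈ preL ts' := by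
          rcases List.mem_append.1 hmem'' with h | h
          · exact absurd h h2
          · exact h
        obtain ⟨he, hb, hi, hlab⟩ := ihl (fun v hv => hsub v (List.mem_cons_of_mem _ hv))
          hndts' hmts'
        refine ⟨?_, ?_, ?_, ?_⟩
        · rw [insAt, if_neg (by omega : ¬ 1 + numSlots t + (delL m ts').2 = 0)]
          have h3 : 1 + numSlots t + (delL m ts').2 - 1 = numSlots t + (delL m ts').2 := by
            omega
          rw [h3, insL, if_neg (by omega : ¬ numSlots t + (delL m ts').2 < numSlots t)]
          by_cases h4 : (delL m ts').2 = 0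
          · rw [if_pos (by omega : numSlots t + (delL m ts').2 = numSlots t)]
            rw [insAt, if_pos h4] at he
            rw [he]
          · rw [if_neg (by omega : ¬ numSlots t + (delL m ts').2 = numSlots t)]
            rw [insAt, if_neg h4] at he
            have h5 : numSlots t + (delL m ts').2 - numSlots t - 1 = (delL m ts').2 - 1 := by
              omega
            rw [h5, he]
        · simp only [numSlotsL]
          omega
        · intro u hu
          rcases List.mem_cons.1 hu with h | h
          · exact h ▸ hincs t htmem
          · exact hi u h
        · intro u hu
          rcases List.mem_cons.1 hu with h | h
          · exact ⟨t, List.mem_cons_self, h ▸ rfl⟩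
          · obtain ⟨v, hv, hv'⟩ := hlab u h
            exact ⟨v, List.mem_cons_of_mem _ hv, hv'⟩
  obtain ⟨he, hb, hi, hlab⟩ := hlist ts (fun u hu => hu) hndL hmem'
  rw [del]
  refine ⟨?_, ?_, ?_, rfl⟩
  · rw [ins_node, he]
  · rw [numSlots_node]
    omega
  · refine .node l _ ?_ hi
    intro u hu
    obtain ⟨v, hv, hv'⟩ := hlab u hu
    rw [hv']
    exact hlt v hv

/-! ### Counting -/

theorem iot_numSlots {n : ℕ} {t : OTree} (h : IsIncOrdTree n t) :
    numSlots t = 2 * n + 1 := by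
  have h1 := numSlots_eq t
  have h2 : t.preorder.length = n + 1 := by
    rw [h.2.1.length_eq, List.length_range]
  omega

theorem iot_le {n : ℕ} {t : OTree} (h : IsIncOrdTree n t) :
    ∀ x ∈ t.preorder, x ≤ n := by
  intro x hx
  have := h.2.1.subset hx
  rw [List.mem_range] at this
  omega

theorem iot_nodup {n : ℕ} {t : OTree} (h : IsIncOrdTree n t) : t.preorder.Nodup :=
  h.2.1.symm.nodup (List.nodup_range)

theorem perm_range_succ (n : ℕ) : (List.range (n + 2)).Perm ((n + 1) :: List.range (n + 1)) := by
  rw [List.range_succ]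
  exact List.perm_append_singleton _ _

/-- The key recursion equivalence. -/
def stepEquiv (n : ℕ) :
    ({t : OTree // IsIncOrdTree n t} × Fin (2 * n + 1)) ≃
      {t : OTree // IsIncOrdTree (n + 1) t} where
  toFun p :=
    ⟨ins (n + 1) p.1.1 p.2.1, by
      obtain ⟨⟨t, ht⟩, ⟨j, hj⟩⟩ := p
      have hjs : j < numSlots t := by rw [iot_numSlots ht]; exact hj
      refine ⟨by rw [label_ins]; exact ht.1, ?_, ?_⟩
      · exact ((preorder_ins (n + 1) t j hjs).trans (ht.2.1.cons _)).trans
          (perm_range_succ n).symm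
      · exact increasing_ins (n + 1) t ht.2.2
          (fun x hx => Nat.lt_succ_of_le (iot_le ht x hx)) j⟩
  invFun s := by
    obtain ⟨t, ht⟩ := s
    have hB := ins_del (n + 1) t ht.2.2 (iot_nodup ht) (iot_le ht)
      (ht.2.1.symm.subset (by rw [List.mem_range]; omega))
      (by rw [ht.1]; omega)
    have hperm : (del (n + 1) t).1.preorder.Perm (List.range (n + 1)) := by
      have h1 : ((n + 1) :: (del (n + 1) t).1.preorder).Perm
          ((n + 1) :: List.range (n + 1)) := by
        refine ((preorder_ins (n + 1) _ _ hB.2.1).symm.trans ?_).trans (perm_range_succ n)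
        rw [hB.1]
        exact ht.2.1
      exact h1.cons_inv
    have hiot : IsIncOrdTree n (del (n + 1) t).1 :=
      ⟨by rw [hB.2.2.2]; exact ht.1, hperm, hB.2.2.1⟩
    exact ⟨⟨(del (n + 1) t).1, hiot⟩,
      ⟨(del (n + 1) t).2, by rw [← iot_numSlots hiot]; exact hB.2.1⟩⟩
  left_inv p := by
    obtain ⟨⟨t, ht⟩, ⟨j, hj⟩⟩ := p
    have hjs : j < numSlots t := by rw [iot_numSlots ht]; exact hj
    have hnm : (n + 1) ∉ t.preorder := fun h => by have := iot_le ht _ h; omega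
    have hd := del_ins (n + 1) t hnm j hjs
    have h1 : (del (n + 1) (ins (n + 1) t j)).1 = t := by rw [hd]
    have h2 : (del (n + 1) (ins (n + 1) t j)).2 = j := by rw [hd]
    exact Prod.ext (Subtype.ext h1) (Fin.ext h2)
  right_inv s := by
    obtain ⟨t, ht⟩ := s
    have hB := ins_del (n + 1) t ht.2.2 (iot_nodup ht) (iot_le ht)
      (ht.2.1.symm.subset (by rw [List.mem_range]; omega))
      (by rw [ht.1]; omega)
    simp only
    exact Subtype.ext hB.1

theorem card_succ (n : ℕ) :
    Nat.card {t : OTree // IsIncOrdTree (n + 1) t}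
      = (2 * n + 1) * Nat.card {t : OTree // IsIncOrdTree n t} := by
  have hfin : Nat.card (Fin (2 * n + 1)) = 2 * n + 1 := by simp
  rw [← Nat.card_congr (stepEquiv n), Nat.card_prod, hfin, Nat.mul_comm]

instance : Unique {t : OTree // IsIncOrdTree 0 t} where
  default := ⟨.node 0 [], rfl, by rw [preorder_node, preL_nil]; rfl, .node 0 [] (by simp) (by simp)⟩
  uniq := by
    rintro ⟨t, ht⟩
    cases t with
    | node l ts =>
      have hl : l = 0 := ht.1
      have hts : ts = [] := by
        have hlen : (OTree.node l ts).preorder.length = 1 := by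
          rw [ht.2.1.length_eq, List.length_range]
        rw [preorder_node] at hlen
        cases ts with
        | nil => rfl
        | cons t' ts' =>
          exfalso
          rw [preL_cons] at hlen
          cases t' with
          | node l' cs =>
            rw [preorder_node] at hlen
            simp at hlen
      subst hl hts
      rfl

theorem card_iot : ∀ n : ℕ, Nat.card {t : OTree // IsIncOrdTree n t}
    = Nat.doubleFactorial (2 * n - 1) := by
  intro n
  induction n with
  | zero => rw [Nat.card_unique]; rfl
  | succ k ih =>
    rw [card_succ, ih]
    cases k with
    | zero => rfl
    | succ k' =>
      have h1 : 2 * (k' + 1 + 1) - 1 = (2 * (k' + 1) - 1) + 2 := by omega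
      have h2 : 2 * (k' + 1) + 1 = (2 * (k' + 1) - 1) + 2 := by omega
      rw [h1, h2, Nat.doubleFactorial_add_two]

theorem stmt3 (n : ℕ) (hn : 1 ≤ n) :
    Nat.card {t : OTree // IsIncOrdTree n t}
      = Nat.doubleFactorial (2 * n - 1) := by
  exact card_iot n
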